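/- For any uniform ultrafilter U on a regular uncountable cardinal κ: (1) πch(U) ≥ 𝔯_κ; and (2) π𝔭(U) ≤ 𝔰_κ, where π𝔭(U) is the least λ such that some family of λ sets in U has no pseudo-intersection in [κ]^κ. -/

import Mathlib

open Cardinal Set

namespace PaperFormal

/-- `A` is unbounded in `κ` (as a set of ordinals below `κ`). -/
def UnboundedIn (κ : Ordinal.{0}) (A : Set Ordinal) : Prop :=
  ∀ α < κ, ∃ β ∈ A, α ≤ β

/-- `A ⊆* B`: almost inclusion (mod bounded) below `κ`. -/
def AlmostSub (κ : Ordinal.{0}) (A B : Set Ordinal) : Prop :=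
  ∃ α < κ, ∀ β ∈ A, α ≤ β → β ∈ B

/-- `C` is closed in `κ`. -/
def ClosedIn (κ : Ordinal.{0}) (C : Set Ordinal) : Prop :=
  ∀ α, α < κ → α ≠ 0 → (∀ β < α, (C ∩ Set.Ioo β α).Nonempty) → α ∈ C

/-- `C` is a club (closed unbounded set) in `κ`. -/
def IsClub (κ : Ordinal.{0}) (C : Set Ordinal) : Prop :=
  C ⊆ Set.Iio κ ∧ UnboundedIn κ C ∧ ClosedIn κ C

/-- `f` maps `κ` into `κ`. -/
def FunOn (κ : Ordinal.{0}) (f : Ordinal → Ordinal) : Prop :=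
  ∀ β < κ, f β < κ

/-- almost everywhere domination `f ≤* g` on `κ`. -/
def LeStar (κ : Ordinal.{0}) (f g : Ordinal → Ordinal) : Prop :=
  ∃ α < κ, ∀ β, α ≤ β → β < κ → f β ≤ g β

def UnboundedFunFam (κ : Ordinal.{0}) (𝒜 : Set (Ordinal → Ordinal)) : Prop :=
  (∀ f ∈ 𝒜, FunOn κ f) ∧ ∀ g, FunOn κ g → ∃ f ∈ 𝒜, ¬ LeStar κ f g

def DominatingFunFam (κ : Ordinal.{0}) (𝒜 : Set (Ordinal → Ordinal)) : Prop :=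
  (∀ f ∈ 𝒜, FunOn κ f) ∧ ∀ g, FunOn κ g → ∃ f ∈ 𝒜, LeStar κ g f

/-- the generalized bounding number `𝔟_κ`. -/
noncomputable def bNum (κ : Ordinal.{0}) : Cardinal :=
  sInf { μ : Cardinal.{0} | ∃ 𝒜, UnboundedFunFam κ 𝒜 ∧ #𝒜 = Cardinal.lift.{1} μ }

/-- the generalized dominating number `𝔡_κ`. -/
noncomputable def dNum (κ : Ordinal.{0}) : Cardinal :=
  sInf { μ : Cardinal.{0} | ∃ 𝒜, DominatingFunFam κ 𝒜 ∧ #𝒜 = Cardinal.lift.{1} μ }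

/-- a (proper) filter on `κ`. -/
structure IsKFilter (κ : Ordinal.{0}) (F : Set (Set Ordinal)) : Prop where
  subset : ∀ A ∈ F, A ⊆ Set.Iio κ
  univ_mem : Set.Iio κ ∈ F
  upward : ∀ A ∈ F, ∀ B, B ⊆ Set.Iio κ → A ⊆ B → B ∈ F
  inter : ∀ A ∈ F, ∀ B ∈ F, A ∩ B ∈ F
  proper : ∅ ∉ F

/-- an ultrafilter on `κ`. -/
structure IsKUltrafilter (κ : Ordinal.{0}) (U : Set (Set Ordinal)) extends IsKFilter κ U : Prop where
  decide : ∀ A, A ⊆ Set.Iio κ → A ∈ U ∨ (Set.Iio κ \ A) ∈ U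

/-- uniformity: every member is unbounded (equivalently, for regular `κ`, of size `κ`). -/
def Uniform (κ : Ordinal.{0}) (F : Set (Set Ordinal)) : Prop :=
  ∀ A ∈ F, UnboundedIn κ A

/-- `κ`-completeness. -/
def KComplete (κ : Ordinal.{0}) (F : Set (Set Ordinal)) : Prop :=
  ∀ s : Set (Set Ordinal), s ⊆ F → s.Nonempty → #s < Cardinal.lift.{1} κ.card → ⋂₀ s ∈ F

/-- closure under diagonal intersections. -/
def DiagClosed (κ : Ordinal.{0}) (F : Set (Set Ordinal)) : Prop :=
  ∀ A : Ordinal → Set Ordinal, (∀ i < κ, A i ∈ F) →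
    {β | β < κ ∧ ∀ i < β, β ∈ A i} ∈ F

/-- a normal ultrafilter on `κ`: `κ`-complete, contains all clubs, closed under
diagonal intersections. -/
def NormalUF (κ : Ordinal.{0}) (U : Set (Set Ordinal)) : Prop :=
  IsKUltrafilter κ U ∧ Uniform κ U ∧ KComplete κ U ∧
    (∀ C, IsClub κ C → C ∈ U) ∧ DiagClosed κ U

/-- `ℬ` is a `⊆*`-base for `F`. -/
def IsBase (κ : Ordinal.{0}) (F ℬ : Set (Set Ordinal)) : Prop :=
  ℬ ⊆ F ∧ ∀ A ∈ F, ∃ B ∈ ℬ, AlmostSub κ B A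

/-- the character of a filter. -/
noncomputable def chNum (κ : Ordinal.{0}) (F : Set (Set Ordinal)) : Cardinal :=
  sInf { μ : Cardinal.{0} | ∃ ℬ, IsBase κ F ℬ ∧ #ℬ = Cardinal.lift.{1} μ }

/-- there is a `⊆*`-decreasing `λ`-sequence in `F` with no `⊆*`-lower bound in `F`. -/
def HasTower (κ : Ordinal.{0}) (F : Set (Set Ordinal)) (lam : Cardinal) : Prop :=
  ∃ S : Ordinal → Set Ordinal, (∀ i < lam.ord, S i ∈ F) ∧
    (∀ i j, i < j → j < lam.ord → AlmostSub κ (S j) (S i)) ∧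
    ¬ ∃ Y ∈ F, ∀ i < lam.ord, AlmostSub κ Y (S i)

/-- the depth `𝔱(F)` of a filter. -/
noncomputable def tNum (κ : Ordinal.{0}) (F : Set (Set Ordinal)) : Cardinal :=
  sInf { μ : Cardinal.{0} | μ.IsRegular ∧ HasTower κ F μ }

/-- the ultrafilter number `𝔲_κ`. -/
noncomputable def uNum (κ : Ordinal.{0}) : Cardinal :=
  sInf { μ : Cardinal.{0} | ∃ U, IsKUltrafilter κ U ∧ Uniform κ U ∧ chNum κ U = μ }

/-- the complete ultrafilter number `𝔲^com_κ`. -/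
noncomputable def uComNum (κ : Ordinal.{0}) : Cardinal :=
  sInf { μ : Cardinal.{0} | ∃ U, IsKUltrafilter κ U ∧ Uniform κ U ∧ KComplete κ U ∧ chNum κ U = μ }

/-- `U` is a simple `P_λ`-point: a uniform ultrafilter with a `⊆*`-decreasing
generating sequence of length `λ`. -/
def SimplePPoint (κ : Ordinal.{0}) (lam : Cardinal) (U : Set (Set Ordinal)) : Prop :=
  IsKUltrafilter κ U ∧ Uniform κ U ∧
    ∃ S : Ordinal → Set Ordinal, (∀ i < lam.ord, S i ∈ U) ∧
      (∀ i j, i < j → j < lam.ord → AlmostSub κ (S j) (S i)) ∧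
      ∀ A ∈ U, ∃ i < lam.ord, AlmostSub κ (S i) A

/-- a `⊆*`-decreasing generating sequence of length `λ` for a filter `F`. -/
def SimplePFilter (κ : Ordinal.{0}) (lam : Cardinal) (F : Set (Set Ordinal)) : Prop :=
  ∃ S : Ordinal → Set Ordinal, (∀ i < lam.ord, S i ∈ F) ∧
    (∀ i j, i < j → j < lam.ord → AlmostSub κ (S j) (S i)) ∧
    ∀ A ∈ F, ∃ i < lam.ord, AlmostSub κ (S i) A

/-- `ℬ` is a `π`-base for `U`: unbounded sets, almost contained in members of `U`. -/
def IsPiBase (κ : Ordinal.{0}) (U ℬ : Set (Set Ordinal)) : Prop :=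
  (∀ B ∈ ℬ, B ⊆ Set.Iio κ ∧ UnboundedIn κ B) ∧ ∀ A ∈ U, ∃ B ∈ ℬ, AlmostSub κ B A

/-- the `π`-character `πch(U)`. -/
noncomputable def piChNum (κ : Ordinal.{0}) (U : Set (Set Ordinal)) : Cardinal :=
  sInf { μ : Cardinal.{0} | ∃ ℬ, IsPiBase κ U ℬ ∧ #ℬ = Cardinal.lift.{1} μ }

/-- `Y` is a pseudo-intersection of the family `𝒜`. -/
def IsPseudoInter (κ : Ordinal.{0}) (𝒜 : Set (Set Ordinal)) (Y : Set Ordinal) : Prop :=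
  Y ⊆ Set.Iio κ ∧ UnboundedIn κ Y ∧ ∀ A ∈ 𝒜, AlmostSub κ Y A

/-- `π𝔭(U)`: the least size of a subfamily of `U` with no pseudo-intersection. -/
noncomputable def piPNum (κ : Ordinal.{0}) (U : Set (Set Ordinal)) : Cardinal :=
  sInf { μ : Cardinal.{0} | ∃ 𝒜, 𝒜 ⊆ U ∧ #𝒜 = Cardinal.lift.{1} μ ∧ ¬ ∃ Y, IsPseudoInter κ 𝒜 Y }

/-- a `⊆*`-decreasing `λ`-sequence in `U` unbounded in `([κ]^κ, ⊇*)`. -/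
def HasPiTower (κ : Ordinal.{0}) (U : Set (Set Ordinal)) (lam : Cardinal) : Prop :=
  ∃ S : Ordinal → Set Ordinal, (∀ i < lam.ord, S i ∈ U) ∧
    (∀ i j, i < j → j < lam.ord → AlmostSub κ (S j) (S i)) ∧
    ¬ ∃ Y, Y ⊆ Set.Iio κ ∧ UnboundedIn κ Y ∧ ∀ i < lam.ord, AlmostSub κ Y (S i)

/-- `π𝔱(U)`. -/
noncomputable def piTNum (κ : Ordinal.{0}) (U : Set (Set Ordinal)) : Cardinal :=
  sInf { μ : Cardinal.{0} | μ.IsRegular ∧ HasPiTower κ U μ }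

/-- `A` splits `B`. -/
def Splits (κ : Ordinal.{0}) (A B : Set Ordinal) : Prop :=
  UnboundedIn κ (B ∩ A) ∧ UnboundedIn κ (B \ A)

/-- the splitting number `𝔰_κ`. -/
noncomputable def sNum (κ : Ordinal.{0}) : Cardinal :=
  sInf { μ : Cardinal.{0} | ∃ 𝒜 : Set (Set Ordinal), (∀ A ∈ 𝒜, A ⊆ Set.Iio κ) ∧
    (∀ X, X ⊆ Set.Iio κ → UnboundedIn κ X → ∃ A ∈ 𝒜, Splits κ A X) ∧ #𝒜 = Cardinal.lift.{1} μ }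

/-- the reaping number `𝔯_κ`. -/
noncomputable def rNum (κ : Ordinal.{0}) : Cardinal :=
  sInf { μ : Cardinal.{0} | ∃ 𝒜 : Set (Set Ordinal), (∀ A ∈ 𝒜, A ⊆ Set.Iio κ ∧ UnboundedIn κ A) ∧
    (¬ ∃ X, X ⊆ Set.Iio κ ∧ ∀ A ∈ 𝒜, Splits κ X A) ∧ #𝒜 = Cardinal.lift.{1} μ }

/-- `f` is almost one-to-one modulo `U`: bounded-to-one on a set in `U`. -/
def AlmostInjMod (κ : Ordinal.{0}) (U : Set (Set Ordinal)) (f : Ordinal → Ordinal) : Prop :=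
  ∃ X ∈ U, ∀ γ < κ, ∃ α < κ, ∀ β ∈ X, f β = γ → β < α

/-- the pushforward `f_*(U)`. -/
def PushFwd (κ : Ordinal.{0}) (f : Ordinal → Ordinal) (U : Set (Set Ordinal)) :
    Set (Set Ordinal) :=
  { A | A ⊆ Set.Iio κ ∧ (Set.Iio κ ∩ f ⁻¹' A) ∈ U }

/-- countable completeness. -/
def CountablyComplete (U : Set (Set Ordinal)) : Prop :=
  ∀ s : Set (Set Ordinal), s ⊆ U → s.Countable → s.Nonempty → ⋂₀ s ∈ U


/-- the least element of `X` strictly above `γ`. -/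
noncomputable def nxt (X : Set Ordinal) (γ : Ordinal) : Ordinal :=
  sInf {β | β ∈ X ∧ γ < β}

/-- transfinite pairing enumeration of `X`. -/
noncomputable def FF (X : Set Ordinal) : Ordinal → Ordinal :=
  WellFounded.fix wellFounded_lt
    (fun i rec => nxt X (⨆ j : i.ToType,
      nxt X (rec ((Ordinal.ToType.mk (o := i)).symm j) ((Ordinal.ToType.mk (o := i)).symm j).2)))

lemma FF_eq (X : Set Ordinal) (i : Ordinal) :
    FF X i = nxt X (⨆ j : i.ToType, nxt X (FF X ((Ordinal.ToType.mk (o := i)).symm j))) := by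
  rw [FF, WellFounded.fix_eq]

lemma nxt_spec {κ : Cardinal.{0}} (hκ : ℵ₀ ≤ κ) {X : Set Ordinal} (hX : X ⊆ Set.Iio κ.ord)
    (hXu : UnboundedIn κ.ord X) {γ : Ordinal} (hγ : γ < κ.ord) :
    nxt X γ ∈ X ∧ γ < nxt X γ ∧ nxt X γ < κ.ord := by
  have h1 : γ + 1 < κ.ord := by
    rw [Ordinal.add_one_eq_succ]
    exact (Cardinal.isSuccLimit_ord hκ).succ_lt hγ
  obtain ⟨β, hβX, hβ⟩ := hXu (γ + 1) h1
  have hne : {β | β ∈ X ∧ γ < β}.Nonempty :=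
    ⟨β, hβX, by rwa [← Order.add_one_le_iff]⟩
  have hmem := csInf_mem hne
  exact ⟨hmem.1, hmem.2, hX hmem.1⟩

lemma FF_spec {κ : Cardinal.{0}} (hreg : κ.IsRegular) {X : Set Ordinal}
    (hX : X ⊆ Set.Iio κ.ord) (hXu : UnboundedIn κ.ord X) :
    ∀ i < κ.ord, FF X i ∈ X ∧ FF X i < κ.ord ∧ ∀ j < i, nxt X (FF X j) < FF X i := by
  intro i
  induction i using Ordinal.induction with
  | h i IH =>
    intro hi
    set t := ⨆ j : i.ToType, nxt X (FF X ((Ordinal.ToType.mk (o := i)).symm j)) with ht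
    have hterm : ∀ j : i.ToType,
        nxt X (FF X ((Ordinal.ToType.mk (o := i)).symm j)) < κ.ord := by
      intro j
      have hj : ((Ordinal.ToType.mk (o := i)).symm j : Ordinal) < i :=
        ((Ordinal.ToType.mk (o := i)).symm j).2
      obtain ⟨h1, h2, _⟩ := IH _ hj (hj.trans hi)
      exact (nxt_spec hreg.aleph0_le hX hXu h2).2.2
    have htlt : t < κ.ord := by
      apply Cardinal.iSup_lt_ord_of_isRegular hreg _ hterm
      rwa [Cardinal.mk_toType, ← Cardinal.lt_ord]
    have hspec := nxt_spec hreg.aleph0_le hX hXu htlt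
    rw [← FF_eq] at hspec
    refine ⟨hspec.1, hspec.2.2, fun j hj => ?_⟩
    have hle : nxt X (FF X j) ≤ t := by
      have := le_ciSup (Ordinal.bddAbove_range
        (fun j : i.ToType => nxt X (FF X ((Ordinal.ToType.mk (o := i)).symm j))))
        ((Ordinal.ToType.mk (o := i)) ⟨j, hj⟩)
      simpa using this
    exact hle.trans_lt hspec.2.1

lemma FF_mono {κ : Cardinal.{0}} (hreg : κ.IsRegular) {X : Set Ordinal}
    (hX : X ⊆ Set.Iio κ.ord) (hXu : UnboundedIn κ.ord X) {j i : Ordinal}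
    (hji : j < i) (hi : i < κ.ord) : FF X j < FF X i := by
  have h1 := (FF_spec hreg hX hXu i hi).2.2 j hji
  have h2 := (nxt_spec hreg.aleph0_le hX hXu (FF_spec hreg hX hXu j (hji.trans hi)).2.1).2.1
  exact h2.trans h1

lemma FF_ge {κ : Cardinal.{0}} (hreg : κ.IsRegular) {X : Set Ordinal}
    (hX : X ⊆ Set.Iio κ.ord) (hXu : UnboundedIn κ.ord X) :
    ∀ i < κ.ord, i ≤ FF X i := by
  intro i
  induction i using Ordinal.induction with
  | h i IH =>
    intro hi
    by_contra h
    push_neg at h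
    have h1 := (FF_spec hreg hX hXu i hi).2.2 _ h
    have h2 := IH _ h (h.trans hi)
    have h3 := (nxt_spec hreg.aleph0_le hX hXu
      (FF_spec hreg hX hXu _ (h.trans hi)).2.1).2.1
    exact absurd ((h2.trans_lt h3).trans h1) (lt_irrefl _)

/-- every unbounded subset of a regular cardinal is split by some subset of `Iio κ.ord`. -/
lemma exists_split {κ : Cardinal.{0}} (hreg : κ.IsRegular) {X : Set Ordinal}
    (hX : X ⊆ Set.Iio κ.ord) (hXu : UnboundedIn κ.ord X) :
    ∃ A ⊆ Set.Iio κ.ord, UnboundedIn κ.ord (X ∩ A) ∧ UnboundedIn κ.ord (X \ A) := by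
  refine ⟨FF X '' Set.Iio κ.ord, ?_, ?_, ?_⟩
  · rintro _ ⟨i, hi, rfl⟩
    exact hX (FF_spec hreg hX hXu i hi).1
  · intro α hα
    exact ⟨FF X α, ⟨(FF_spec hreg hX hXu α hα).1, ⟨α, hα, rfl⟩⟩, FF_ge hreg hX hXu α hα⟩
  · intro α hα
    obtain ⟨hmem, hlt, hltκ⟩ :=
      nxt_spec hreg.aleph0_le hX hXu (FF_spec hreg hX hXu α hα).2.1
    refine ⟨nxt X (FF X α), ⟨hmem, ?_⟩,
      (FF_ge hreg hX hXu α hα).trans hlt.le⟩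
    rintro ⟨j, hj, hjeq⟩
    rcases lt_trichotomy j α with h | h | h
    · exact absurd hjeq (ne_of_lt ((FF_mono hreg hX hXu h hα).trans hlt))
    · subst h; exact absurd hjeq (ne_of_lt hlt)
    · exact absurd hjeq (ne_of_gt ((FF_spec hreg hX hXu j hj).2.2 α h))

/-- for any uniform ultrafilter `U` on regular uncountable `κ`,
`πch(U) ≥ 𝔯_κ` and `π𝔭(U) ≤ 𝔰_κ`. -/
theorem stmt11 (κ : Cardinal.{0}) (hreg : κ.IsRegular) (hunc : Cardinal.aleph0 < κ)
    (U : Set (Set Ordinal)) (hU : IsKUltrafilter κ.ord U) (huni : Uniform κ.ord U) :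
    rNum κ.ord ≤ piChNum κ.ord U ∧ piPNum κ.ord U ≤ sNum κ.ord := by
  classical
  have hpos : (0 : Ordinal) < κ.ord :=
    Cardinal.lt_ord.2 (by simpa using aleph0_pos.trans hunc)
  have hpow : #(↥(𝒫 (Set.Iio κ.ord))) = Cardinal.lift.{1} (2 ^ κ) := by
    rw [Cardinal.mk_powerset, Ordinal.mk_Iio_ordinal, Cardinal.card_ord,
      ← Cardinal.lift_two_power]
  constructor
  · -- rNum ≤ piChNum
    have hUsub : U ⊆ 𝒫 (Set.Iio κ.ord) := fun A hA => hU.subset A hA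
    have hUle : #U ≤ Cardinal.lift.{1} (2 ^ κ) := hpow ▸ Cardinal.mk_le_mk_of_subset hUsub
    obtain ⟨μ0, hμ0⟩ := Cardinal.mem_range_lift_of_le hUle
    have hne : { μ : Cardinal.{0} |
        ∃ ℬ, IsPiBase κ.ord U ℬ ∧ #ℬ = Cardinal.lift.{1} μ }.Nonempty :=
      ⟨μ0, U, ⟨fun B hB => ⟨hU.subset B hB, huni B hB⟩,
        fun A hA => ⟨A, hA, 0, hpos, fun β hβ _ => hβ⟩⟩, hμ0.symm⟩
    apply csInf_le_csInf (OrderBot.bddBelow _) hne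
    rintro μ ⟨ℬ, ⟨hB1, hB2⟩, hBcard⟩
    refine ⟨ℬ, hB1, ?_, hBcard⟩
    rintro ⟨Xs, hXs, hsplit⟩
    rcases hU.decide Xs hXs with hXU | hXU
    · obtain ⟨B, hB, α, hα, hsub⟩ := hB2 Xs hXU
      obtain ⟨β, hβ, hαβ⟩ := (hsplit B hB).2 α hα
      exact hβ.2 (hsub β hβ.1 hαβ)
    · obtain ⟨B, hB, α, hα, hsub⟩ := hB2 _ hXU
      obtain ⟨β, hβ, hαβ⟩ := (hsplit B hB).1 α hα
      exact (hsub β hβ.1 hαβ).2 hβ.2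
  · -- piPNum ≤ sNum
    have hsne : { μ : Cardinal.{0} | ∃ 𝒜 : Set (Set Ordinal),
        (∀ A ∈ 𝒜, A ⊆ Set.Iio κ.ord) ∧
        (∀ X, X ⊆ Set.Iio κ.ord → UnboundedIn κ.ord X → ∃ A ∈ 𝒜, Splits κ.ord A X) ∧
        Cardinal.mk 𝒜 = Cardinal.lift.{1} μ }.Nonempty := by
      refine ⟨2 ^ κ, 𝒫 (Set.Iio κ.ord), fun A hA => hA, ?_, hpow⟩
      intro X hXs hXu
      obtain ⟨A, hA, h1, h2⟩ := exists_split hreg hXs hXu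
      exact ⟨A, hA, h1, h2⟩
    obtain ⟨𝒜, h𝒜1, h𝒜2, h𝒜c⟩ := csInf_mem hsne
    set g : Set Ordinal → Set Ordinal := fun A => if A ∈ U then A else Set.Iio κ.ord \ A
      with hg
    have hgU : ∀ A ∈ 𝒜, g A ∈ U := by
      intro A hA
      by_cases h : A ∈ U
      · simpa [hg, h]
      · rcases hU.decide A (h𝒜1 A hA) with h' | h'
        · exact absurd h' h
        · simpa [hg, h] using h'
    have hle : #(↥(g '' 𝒜)) ≤ Cardinal.lift.{1} (sNum κ.ord) :=
      le_of_le_of_eq Cardinal.mk_image_le h𝒜c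
    obtain ⟨μ', hμ'⟩ := Cardinal.mem_range_lift_of_le hle
    have h2 : μ' ≤ sNum κ.ord := Cardinal.lift_le.1 (le_of_eq_of_le hμ' hle)
    refine le_trans (csInf_le' ?_) h2
    refine ⟨g '' 𝒜, ?_, hμ'.symm, ?_⟩
    · rintro _ ⟨A, hA, rfl⟩; exact hgU A hA
    · rintro ⟨Y, hY1, hY2, hY3⟩
      obtain ⟨A, hA, hs1, hs2⟩ := h𝒜2 Y hY1 hY2
      obtain ⟨α, hα, hsub⟩ := hY3 (g A) ⟨A, hA, rfl⟩
      by_cases h : A ∈ U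
      · obtain ⟨β, hβ, hαβ⟩ := hs2 α hα
        have hb := hsub β hβ.1 hαβ
        rw [hg] at hb; simp only [h, if_true] at hb
        exact hβ.2 hb
      · obtain ⟨β, hβ, hαβ⟩ := hs1 α hα
        have hb := hsub β hβ.1 hαβ
        rw [hg] at hb; simp only [h, if_false] at hb
        exact hb.2 hβ.2

end PaperFormal
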